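/- Let p be a prime, let m, n ≥ 1, let φ : F_n → Aut(ℤ/pℤ) be a homomorphism, let A = ℤ/pℤ ⋊_φ F_n, let i, j : F_m → F_n be homomorphisms, let ĩ = inr ∘ i and j̃ = inr ∘ j : F_m → A, and let Γ = A *_{F_m} A be the pushout of ĩ and j̃ with canonical maps of₁, of₂ : A → Γ. Let Λ' = F_n *_{F_m} F_n be the pushout of i and j with canonical maps of'₁, of'₂ : F_n → Λ'. Then the homomorphism π : Γ → Λ' induced by the projections rightHom : A → F_n (i.e. π ∘ ofₖ = of'ₖ ∘ rightHom for k = 1, 2) is surjective, and its kernel is the normal closure in Γ of the union of₁(inl(ℤ/pℤ)) ∪ of₂(inl(ℤ/pℤ)) of the images of the two canonical copies of ℤ/pℤ. -/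

import Mathlib

universe u

/-- The two-element family of groups `G₁, G₂`, indexed by `Bool`. -/
abbrev fam2 (G₁ G₂ : Type u) : Bool → Type u := fun b => bif b then G₁ else G₂

instance fam2Group (G₁ G₂ : Type u) [g₁ : Group G₁] [g₂ : Group G₂] :
    ∀ b, Group (fam2 G₁ G₂ b)
  | true => g₁
  | false => g₂

/-- A pair of homomorphisms `φ₁ : K →* G₁`, `φ₂ : K →* G₂` as a `Bool`-indexed family,
so that `Monoid.PushoutI (fam2Hom φ₁ φ₂)` is the pushout `G₁ *_K G₂`. -/
def fam2Hom {K G₁ G₂ : Type u} [Group K] [Group G₁] [Group G₂]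
    (φ₁ : K →* G₁) (φ₂ : K →* G₂) : ∀ b, K →* fam2 G₁ G₂ b
  | true => φ₁
  | false => φ₂

/-- Let `A = ℤ/pℤ ⋊[φ] F_n`, let `Γ = A *_{F_m} A` be the pushout of `ĩ = inr ∘ i` and
`j̃ = inr ∘ j`, and let `Λ' = F_n *_{F_m} F_n` be the pushout of `i` and `j`.  The
homomorphism `π : Γ →* Λ'` induced by the projections `rightHom : A →* F_n` is
surjective, with kernel the normal closure of the images of the two copies of `ℤ/pℤ`. -/
theorem pushout_semidirect_proj_surjective_and_ker
    (p m n : ℕ) (hp : p.Prime) (hm : 1 ≤ m) (hn : 1 ≤ n)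
    (φ : FreeGroup (Fin n) →* MulAut (Multiplicative (ZMod p)))
    (i j : FreeGroup (Fin m) →* FreeGroup (Fin n))
    (π : Monoid.PushoutI
          (fam2Hom
            ((SemidirectProduct.inr :
                FreeGroup (Fin n) →* Multiplicative (ZMod p) ⋊[φ] FreeGroup (Fin n)).comp i)
            ((SemidirectProduct.inr :
                FreeGroup (Fin n) →* Multiplicative (ZMod p) ⋊[φ] FreeGroup (Fin n)).comp j))
          →* Monoid.PushoutI (fam2Hom i j))
    (hπ₁ : π.comp (Monoid.PushoutI.of
              (φ := fam2Hom (SemidirectProduct.inr.comp i) (SemidirectProduct.inr.comp j)) true)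
        = (Monoid.PushoutI.of (φ := fam2Hom i j) true).comp
            (SemidirectProduct.rightHom :
              Multiplicative (ZMod p) ⋊[φ] FreeGroup (Fin n) →* FreeGroup (Fin n)))
    (hπ₂ : π.comp (Monoid.PushoutI.of
              (φ := fam2Hom (SemidirectProduct.inr.comp i) (SemidirectProduct.inr.comp j)) false)
        = (Monoid.PushoutI.of (φ := fam2Hom i j) false).comp
            (SemidirectProduct.rightHom :
              Multiplicative (ZMod p) ⋊[φ] FreeGroup (Fin n) →* FreeGroup (Fin n))) :
    Function.Surjective π ∧
      π.ker = Subgroup.normalClosure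
        (Set.range ((Monoid.PushoutI.of
            (φ := fam2Hom (SemidirectProduct.inr.comp i) (SemidirectProduct.inr.comp j))
            true).comp
          (SemidirectProduct.inl :
            Multiplicative (ZMod p) →* Multiplicative (ZMod p) ⋊[φ] FreeGroup (Fin n))) ∪
         Set.range ((Monoid.PushoutI.of
            (φ := fam2Hom (SemidirectProduct.inr.comp i) (SemidirectProduct.inr.comp j))
            false).comp
          (SemidirectProduct.inl :
            Multiplicative (ZMod p) →* Multiplicative (ZMod p) ⋊[φ] FreeGroup (Fin n)))) := by
  classical
  let A := Multiplicative (ZMod p) ⋊[φ] FreeGroup (Fin n)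
  let Φ := fam2Hom ((SemidirectProduct.inr : FreeGroup (Fin n) →* A).comp i) ((SemidirectProduct.inr : FreeGroup (Fin n) →* A).comp j)
  let Ψ := fam2Hom i j
  let f : ∀ b, fam2 (FreeGroup (Fin n)) (FreeGroup (Fin n)) b →* Monoid.PushoutI Φ :=
    fun b => match b with
    | true => (Monoid.PushoutI.of (φ := Φ) true).comp (SemidirectProduct.inr : FreeGroup (Fin n) →* A)
    | false => (Monoid.PushoutI.of (φ := Φ) false).comp (SemidirectProduct.inr : FreeGroup (Fin n) →* A)
  have hf : ∀ b, (f b).comp (Ψ b) = Monoid.PushoutI.base Φ := by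
    intro b
    cases b
    · rw [show f false = (Monoid.PushoutI.of (φ := Φ) false).comp (SemidirectProduct.inr : FreeGroup (Fin n) →* A) from rfl,
        MonoidHom.comp_assoc]
      exact Monoid.PushoutI.of_comp_eq_base false
    · rw [show f true = (Monoid.PushoutI.of (φ := Φ) true).comp (SemidirectProduct.inr : FreeGroup (Fin n) →* A) from rfl,
        MonoidHom.comp_assoc]
      exact Monoid.PushoutI.of_comp_eq_base true
  let s : Monoid.PushoutI Ψ →* Monoid.PushoutI Φ :=
    Monoid.PushoutI.lift f (Monoid.PushoutI.base Φ) hf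
  have hπs : π.comp s = MonoidHom.id _ := by
    apply Monoid.PushoutI.hom_ext_nonempty
    intro b
    cases b
    · ext x
      show π (s (Monoid.PushoutI.of (φ := Ψ) false x)) = Monoid.PushoutI.of (φ := Ψ) false x
      rw [show s (Monoid.PushoutI.of (φ := Ψ) false x)
          = Monoid.PushoutI.of (φ := Φ) false ((SemidirectProduct.inr : FreeGroup (Fin n) →* A) x) from
        Monoid.PushoutI.lift_of _ _ _ _]
      exact (DFunLike.congr_fun hπ₂ ((SemidirectProduct.inr : FreeGroup (Fin n) →* A) x)).trans
        (congrArg (⇑(Monoid.PushoutI.of (φ := Ψ) false)) (SemidirectProduct.rightHom_inr x))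
    · ext x
      show π (s (Monoid.PushoutI.of (φ := Ψ) true x)) = Monoid.PushoutI.of (φ := Ψ) true x
      rw [show s (Monoid.PushoutI.of (φ := Ψ) true x)
          = Monoid.PushoutI.of (φ := Φ) true ((SemidirectProduct.inr : FreeGroup (Fin n) →* A) x) from
        Monoid.PushoutI.lift_of _ _ _ _]
      exact (DFunLike.congr_fun hπ₁ ((SemidirectProduct.inr : FreeGroup (Fin n) →* A) x)).trans
        (congrArg (⇑(Monoid.PushoutI.of (φ := Ψ) true)) (SemidirectProduct.rightHom_inr x))
  have hsurj : Function.Surjective π := by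
    intro y
    refine ⟨s y, ?_⟩
    have := DFunLike.congr_fun hπs y
    exact this
  refine ⟨hsurj, ?_⟩
  let S : Set (Monoid.PushoutI Φ) :=
      Set.range ((Monoid.PushoutI.of (φ := Φ) true).comp SemidirectProduct.inl) ∪
      Set.range ((Monoid.PushoutI.of (φ := Φ) false).comp SemidirectProduct.inl)
  let N := Subgroup.normalClosure S
  show π.ker = N
  have hmemtrue : ∀ a : Multiplicative (ZMod p),
      Monoid.PushoutI.of (φ := Φ) true (SemidirectProduct.inl a) ∈ N := fun a =>
    Subgroup.subset_normalClosure (Or.inl ⟨a, rfl⟩)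
  have hmemfalse : ∀ a : Multiplicative (ZMod p),
      Monoid.PushoutI.of (φ := Φ) false (SemidirectProduct.inl a) ∈ N := fun a =>
    Subgroup.subset_normalClosure (Or.inr ⟨a, rfl⟩)
  have hle : N ≤ π.ker := by
    apply Subgroup.normalClosure_le_normal
    rintro x (⟨a, rfl⟩ | ⟨a, rfl⟩)
    · show Monoid.PushoutI.of (φ := Φ) true (SemidirectProduct.inl a) ∈ π.ker
      rw [MonoidHom.mem_ker]
      exact (DFunLike.congr_fun hπ₁ (SemidirectProduct.inl a : A)).trans
        ((congrArg (⇑(Monoid.PushoutI.of (φ := Ψ) true)) (SemidirectProduct.rightHom_inl a)).trans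
          (map_one _))
    · show Monoid.PushoutI.of (φ := Φ) false (SemidirectProduct.inl a) ∈ π.ker
      rw [MonoidHom.mem_ker]
      exact (DFunLike.congr_fun hπ₂ (SemidirectProduct.inl a : A)).trans
        ((congrArg (⇑(Monoid.PushoutI.of (φ := Ψ) false)) (SemidirectProduct.rightHom_inl a)).trans
          (map_one _))
  let q : Monoid.PushoutI Φ →* Monoid.PushoutI Φ ⧸ N := QuotientGroup.mk' N
  have key : (q.comp s).comp π = q := by
    apply Monoid.PushoutI.hom_ext_nonempty
    intro b
    cases b
    · ext x
      show q (s (π (Monoid.PushoutI.of (φ := Φ) false x))) = q (Monoid.PushoutI.of (φ := Φ) false x)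
      rw [show π (Monoid.PushoutI.of (φ := Φ) false x)
            = Monoid.PushoutI.of (φ := Ψ) false (SemidirectProduct.rightHom x) from
          DFunLike.congr_fun hπ₂ x,
        show s (Monoid.PushoutI.of (φ := Ψ) false (SemidirectProduct.rightHom x))
            = Monoid.PushoutI.of (φ := Φ) false ((SemidirectProduct.inr : FreeGroup (Fin n) →* A) (SemidirectProduct.rightHom x)) from
          Monoid.PushoutI.lift_of _ _ _ _]
      show ((QuotientGroup.mk' N) _ : _ ⧸ N) = (QuotientGroup.mk' N) _
      rw [QuotientGroup.mk'_apply, QuotientGroup.mk'_apply, QuotientGroup.eq]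
      have hx : (SemidirectProduct.inl x.left) * ((SemidirectProduct.inr : FreeGroup (Fin n) →* A) x.right) = x :=
        SemidirectProduct.inl_left_mul_inr_right x
      have hrh : (SemidirectProduct.inr : FreeGroup (Fin n) →* A) (SemidirectProduct.rightHom x) = (SemidirectProduct.inr : FreeGroup (Fin n) →* A) x.right := rfl
      rw [hrh, ← hx, map_mul]
      have hc : (Monoid.PushoutI.of (φ := Φ) false ((SemidirectProduct.inr : FreeGroup (Fin n) →* A) x.right))⁻¹ *
          (Monoid.PushoutI.of (φ := Φ) false (SemidirectProduct.inl x.left) *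
          Monoid.PushoutI.of (φ := Φ) false ((SemidirectProduct.inr : FreeGroup (Fin n) →* A) x.right)) ∈ N := by
        have hn : Subgroup.Normal N := Subgroup.normalClosure_normal
        have := hn.conj_mem _ (hmemfalse x.left)
            (Monoid.PushoutI.of (φ := Φ) false ((SemidirectProduct.inr : FreeGroup (Fin n) →* A) x.right))⁻¹
        simpa [mul_assoc] using this
      simpa [mul_assoc] using hc
    · ext x
      show q (s (π (Monoid.PushoutI.of (φ := Φ) true x))) = q (Monoid.PushoutI.of (φ := Φ) true x)
      rw [show π (Monoid.PushoutI.of (φ := Φ) true x)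
            = Monoid.PushoutI.of (φ := Ψ) true (SemidirectProduct.rightHom x) from
          DFunLike.congr_fun hπ₁ x,
        show s (Monoid.PushoutI.of (φ := Ψ) true (SemidirectProduct.rightHom x))
            = Monoid.PushoutI.of (φ := Φ) true ((SemidirectProduct.inr : FreeGroup (Fin n) →* A) (SemidirectProduct.rightHom x)) from
          Monoid.PushoutI.lift_of _ _ _ _]
      show ((QuotientGroup.mk' N) _ : _ ⧸ N) = (QuotientGroup.mk' N) _
      rw [QuotientGroup.mk'_apply, QuotientGroup.mk'_apply, QuotientGroup.eq]
      have hx : (SemidirectProduct.inl x.left) * ((SemidirectProduct.inr : FreeGroup (Fin n) →* A) x.right) = x :=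
        SemidirectProduct.inl_left_mul_inr_right x
      have hrh : (SemidirectProduct.inr : FreeGroup (Fin n) →* A) (SemidirectProduct.rightHom x) = (SemidirectProduct.inr : FreeGroup (Fin n) →* A) x.right := rfl
      rw [hrh, ← hx, map_mul]
      have hc : (Monoid.PushoutI.of (φ := Φ) true ((SemidirectProduct.inr : FreeGroup (Fin n) →* A) x.right))⁻¹ *
          (Monoid.PushoutI.of (φ := Φ) true (SemidirectProduct.inl x.left) *
          Monoid.PushoutI.of (φ := Φ) true ((SemidirectProduct.inr : FreeGroup (Fin n) →* A) x.right)) ∈ N := by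
        have hn : Subgroup.Normal N := Subgroup.normalClosure_normal
        have := hn.conj_mem _ (hmemtrue x.left)
            (Monoid.PushoutI.of (φ := Φ) true ((SemidirectProduct.inr : FreeGroup (Fin n) →* A) x.right))⁻¹
        simpa [mul_assoc] using this
      simpa [mul_assoc] using hc
  have hge : π.ker ≤ N := by
    intro x hx
    have h1 : q x = 1 := by
      have := DFunLike.congr_fun key x
      simp only [MonoidHom.comp_apply] at this
      rw [← this, MonoidHom.mem_ker.mp hx, map_one, map_one]
    exact (QuotientGroup.eq_one_iff x).mp h1
  exact le_antisymm hge hle
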